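/- arXiv:2103.11964 — 3 statements merged into one kernel-verified Lean document; each statement's English description precedes it below -/
import Mathlib

section
/- Let R ∈ ℝ with R ≠ −2, and set M = (−1 − R)/(1 + R/2)², B = 1 + R/(1 + R/2), and y₀ = −1/(1 + R/2). Then (y₀, y₀) is a fixed point of the generalized Hénon map H_{M,B,R}, and the 2×2 derivative matrix [[0, 1], [−B − R·y₀, −2y₀ − R·y₀]] of H_{M,B,R} at (y₀, y₀) has trace 2 and determinant 1, i.e., its characteristic polynomial is (X − 1)², so both its eigenvalues equal +1. -/
/-- The generalized Hénon map `H_{M,B,R} : ℝ² → ℝ²`,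
`H_{M,B,R}(x, y) = (y, M − B·x − y² − R·x·y)`. -/
noncomputable def genHenon (M B R : ℝ) : ℝ × ℝ → ℝ × ℝ :=
  fun p => (p.2, M - B * p.1 - p.2 ^ 2 - R * p.1 * p.2)

lemma aux_charpoly : Matrix.charpoly !![(0:ℝ), 1; -1, 2] = (Polynomial.X - Polynomial.C 1) ^ 2 := by
  unfold Matrix.charpoly
  rw [Matrix.det_fin_two]
  simp [Matrix.charmatrix_apply_eq, Matrix.charmatrix_apply_ne]
  rw [show (Polynomial.C (2:ℝ)) = 2 from map_ofNat Polynomial.C 2]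
  ring

lemma aux_spec (μ : ℝ) (h : μ ∈ spectrum ℝ !![(0:ℝ), 1; -1, 2]) : μ = 1 := by
  rw [spectrum.mem_iff, Matrix.isUnit_iff_isUnit_det] at h
  have e : (algebraMap ℝ (Matrix (Fin 2) (Fin 2) ℝ) μ) - !![0, 1; -1, 2] = !![μ, -1; 1, μ - 2] := by
    rw [Matrix.algebraMap_eq_diagonal]
    ext i j
    fin_cases i <;> fin_cases j <;> simp [Matrix.diagonal]
  rw [e, Matrix.det_fin_two_of, isUnit_iff_ne_zero] at h
  push_neg at h
  nlinarith [sq_nonneg (μ - 1)]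

/-- At the Bogdanov–Takens parameter values `M = (−1−R)/(1+R/2)²`, `B = 1 + R/(1+R/2)`,
the point `(y₀, y₀)` with `y₀ = −1/(1+R/2)` is a fixed point of `H_{M,B,R}`, and the
derivative matrix `[[0, 1], [−B − R·y₀, −2y₀ − R·y₀]]` there has trace `2` and
determinant `1`; its characteristic polynomial is `(X − 1)²`, so both its eigenvalues
equal `+1`. -/
theorem genHenon_bogdanovTakens (R : ℝ) (hR : R ≠ -2)
    (M B y₀ : ℝ) (hM : M = (-1 - R) / (1 + R / 2) ^ 2)
    (hB : B = 1 + R / (1 + R / 2)) (hy₀ : y₀ = -1 / (1 + R / 2)) :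
    genHenon M B R (y₀, y₀) = (y₀, y₀) ∧
    Matrix.trace !![0, 1; -B - R * y₀, -2 * y₀ - R * y₀] = 2 ∧
    Matrix.det !![0, 1; -B - R * y₀, -2 * y₀ - R * y₀] = 1 ∧
    Matrix.charpoly !![0, 1; -B - R * y₀, -2 * y₀ - R * y₀] =
      (Polynomial.X - Polynomial.C 1) ^ 2 ∧
    ∀ μ : ℝ, μ ∈ spectrum ℝ !![0, 1; -B - R * y₀, -2 * y₀ - R * y₀] → μ = 1 := by
  have h0 : (1 : ℝ) + R / 2 ≠ 0 := by
    intro h; apply hR; linarith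
  have h0' : (2 : ℝ) + R ≠ 0 := by
    intro h; apply hR; linarith
  have h2 : -B - R * y₀ = -1 := by
    subst hB hy₀; field_simp; ring
  have h3 : -2 * y₀ - R * y₀ = 2 := by
    subst hy₀; field_simp [h0']; ring
  refine ⟨?_, ?_, ?_, ?_, ?_⟩
  · simp only [genHenon, Prod.mk.injEq]
    refine ⟨trivial, ?_⟩
    subst hM hB hy₀; field_simp [h0']; ring
  · rw [h2, h3, Matrix.trace_fin_two_of]; ring
  · rw [h2, h3, Matrix.det_fin_two_of]; ring
  · rw [h2, h3]; exact aux_charpoly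
  · rw [h2, h3]; exact aux_spec
end

section
/- Let M, B, R ∈ ℝ with R ≠ −2. If (x, y) ∈ ℝ² is a fixed point of the generalized Hénon map H_{M,B,R} at which the 2×2 derivative matrix [[0, 1], [−B − R·y, −2y − R·x]] has trace 2 and determinant 1, then necessarily x = y = −1/(1 + R/2), B = 1 + R/(1 + R/2), and M = (−1 − R)/(1 + R/2)². In other words, for each fixed R ≠ −2 the Bogdanov–Takens point is the unique pair of parameters (M, B) for which H_{M,B,R} has a fixed point with a double eigenvalue +1. -/
/-- If `(x, y)` is a fixed point of `H_{M,B,R}` (with `R ≠ −2`) at which the derivative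
matrix `[[0, 1], [−B − R·y, −2y − R·x]]` has trace `2` and determinant `1`, then
`x = y = −1/(1+R/2)`, `B = 1 + R/(1+R/2)` and `M = (−1−R)/(1+R/2)²`: the
Bogdanov–Takens point is the unique parameter pair `(M, B)` for which `H_{M,B,R}`
has a fixed point with a double eigenvalue `+1`. -/
theorem genHenon_bogdanovTakens_unique (M B R x y : ℝ) (hR : R ≠ -2)
    (hfix : genHenon M B R (x, y) = (x, y))
    (htrace : Matrix.trace !![0, 1; -B - R * y, -2 * y - R * x] = 2)
    (hdet : Matrix.det !![0, 1; -B - R * y, -2 * y - R * x] = 1) :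
    x = -1 / (1 + R / 2) ∧ y = -1 / (1 + R / 2) ∧
    B = 1 + R / (1 + R / 2) ∧ M = (-1 - R) / (1 + R / 2) ^ 2 := by
  have h2 : (2 : ℝ) + R ≠ 0 := fun h => hR (by linarith)
  have h2' : (1 : ℝ) + R / 2 ≠ 0 := fun h => hR (by linarith)
  simp only [genHenon, Prod.mk.injEq] at hfix
  obtain ⟨h1, hM⟩ := hfix
  rw [Matrix.trace_fin_two_of] at htrace
  rw [Matrix.det_fin_two_of] at hdet
  subst h1
  have hy' : y * (1 + R / 2) = -1 := by nlinarith [htrace]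
  have hy : y = -1 / (1 + R / 2) := by
    rw [eq_div_iff h2']; linarith
  have hB' : B + R * y = 1 := by linarith [hdet]
  have hB : B = 1 - R * y := by linarith
  have hM' : M = 2 * y + y ^ 2 := by linear_combination hM + y * hB'
  refine ⟨hy, hy, ?_, ?_⟩
  · rw [hB, hy]; field_simp; ring
  · rw [eq_div_iff (by positivity : ((1:ℝ) + R/2)^2 ≠ 0)]
    linear_combination (1 + R/2)^2 * hM' + (y*(1 + R/2) + 2*(1 + R/2) - 1) * hy'
end

section
/- Let (X, d) be a compact metric space, f : X → X a continuous map, and D ⊆ X a nonempty set such that diam(fⁿ(D)) → 0 as n → ∞. Then for any two points x, y ∈ D, the sequence of empirical measures μ_n^x = (1/n)·∑_{i=0}^{n−1} δ_{fⁱ(x)} converges in the weak* topology if and only if the sequence μ_n^y = (1/n)·∑_{i=0}^{n−1} δ_{fⁱ(y)} converges, and in that case the two limits coincide. In particular, x has historic behavior if and only if y has historic behavior. -/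
open Filter Topology MeasureTheory ENNReal

/-- The `n`-th empirical measure `μ_n^x = (1/n)·∑_{i=0}^{n-1} δ_{fⁱ(x)}` (for `n ≥ 1`,
indexed here so that `empiricalMeasure f x n` is `μ_{n+1}^x`) along the orbit of `x`
under `f`, as a Borel probability measure; weak* convergence of the sequence of
empirical measures is convergence in the topology of `MeasureTheory.ProbabilityMeasure`. -/
noncomputable def empiricalMeasure {X : Type*} [MeasurableSpace X] (f : X → X) (x : X)
    (n : ℕ) : ProbabilityMeasure X :=
  ⟨((n + 1 : ℝ≥0∞))⁻¹ • ∑ i ∈ Finset.range (n + 1), Measure.dirac (f^[i] x), by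
    constructor
    simp [Measure.smul_apply, Measure.finset_sum_apply, smul_eq_mul]
    rw [ENNReal.inv_mul_cancel (by simp) (by simp)]⟩

lemma integral_empirical {X : Type*} [MetricSpace X] [MeasurableSpace X] [BorelSpace X]
    (f : X → X) (x : X) (n : ℕ) (g : BoundedContinuousFunction X ℝ) :
    ∫ z, g z ∂(empiricalMeasure f x n : Measure X)
      = ((n : ℝ) + 1)⁻¹ * ∑ i ∈ Finset.range (n + 1), g (f^[i] x) := by
  show ∫ z, g z ∂(((n + 1 : ℝ≥0∞))⁻¹ • ∑ i ∈ Finset.range (n + 1), Measure.dirac (f^[i] x)) = _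
  rw [integral_smul_measure, integral_finset_sum_measure (fun i _ => by
    exact (BoundedContinuousFunction.integrable _ g))]
  simp [integral_dirac, ENNReal.toReal_inv, smul_eq_mul]
  left
  rw [ENNReal.toReal_add (by simp) (by simp)]; simp

lemma key_transfer {X : Type*} [MetricSpace X]
    [CompactSpace X] [MeasurableSpace X] [BorelSpace X]
    (f : X → X) {x y : X}
    (hxy : Tendsto (fun n : ℕ => dist (f^[n] x) (f^[n] y)) atTop (𝓝 0))
    {ν : ProbabilityMeasure X}
    (hx : Tendsto (empiricalMeasure f x) atTop (𝓝 ν)) :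
    Tendsto (empiricalMeasure f y) atTop (𝓝 ν) := by
  rw [ProbabilityMeasure.tendsto_iff_forall_integral_tendsto] at hx ⊢
  intro g
  have hxg := hx g
  -- the difference of integrals tends to 0
  have hg : UniformContinuous g := CompactSpace.uniformContinuous_of_continuous g.continuous
  have hdiff : Tendsto (fun i : ℕ => g (f^[i] y) - g (f^[i] x)) atTop (𝓝 0) := by
    rw [Metric.tendsto_atTop]
    intro ε hε
    obtain ⟨δ, hδ, hδ'⟩ := Metric.uniformContinuous_iff.mp hg ε hε
    obtain ⟨N, hN⟩ := (Metric.tendsto_atTop.mp hxy) δ hδ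
    refine ⟨N, fun n hn => ?_⟩
    have := hN n hn
    rw [Real.dist_eq, sub_zero] at this ⊢
    rw [abs_of_nonneg dist_nonneg] at this
    have := hδ' (show dist (f^[n] y) (f^[n] x) < δ by rwa [dist_comm])
    rwa [Real.dist_eq] at this
  have hces : Tendsto (fun n : ℕ =>
      ((n : ℝ) + 1)⁻¹ * ∑ i ∈ Finset.range (n + 1), (g (f^[i] y) - g (f^[i] x)))
      atTop (𝓝 0) := by
    have h := (hdiff.cesaro).comp (tendsto_add_atTop_nat 1)
    refine h.congr fun n => ?_
    simp only [Function.comp, smul_eq_mul]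
    push_cast
    ring
  have : Tendsto (fun n => ∫ z, g z ∂((empiricalMeasure f y n : Measure X)))
      atTop (𝓝 (∫ z, g z ∂(ν : Measure X))) := by
    have h2 : ∀ n : ℕ, ∫ z, g z ∂((empiricalMeasure f y n : Measure X))
        = ∫ z, g z ∂((empiricalMeasure f x n : Measure X))
          + ((n : ℝ) + 1)⁻¹ * ∑ i ∈ Finset.range (n + 1), (g (f^[i] y) - g (f^[i] x)) := by
      intro n
      rw [integral_empirical, integral_empirical, Finset.mul_sum, Finset.mul_sum,
        Finset.mul_sum, ← Finset.sum_add_distrib]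
      congr 1; ext i; ring
    simp only [h2]
    simpa using hxg.add hces
  exact this

/-- Let `X` be a compact metric space, `f : X → X` continuous, and `D ⊆ X` a nonempty
set with `diam(fⁿ(D)) → 0`.  Then for `x, y ∈ D`, the sequence of empirical measures
of `x` converges in the weak* topology iff that of `y` does, and in that case the two
limits coincide.  In particular, `x` has historic behavior iff `y` does. -/
theorem empiricalMeasure_tendsto_iff_of_diam_tendsto_zero {X : Type*} [MetricSpace X]
    [CompactSpace X] [MeasurableSpace X] [BorelSpace X]
    (f : X → X) (hf : Continuous f) (D : Set X) (hD : D.Nonempty)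
    (hdiam : Tendsto (fun n : ℕ => Metric.diam (f^[n] '' D)) atTop (𝓝 0)) :
    ∀ x ∈ D, ∀ y ∈ D,
      ((∃ ν : ProbabilityMeasure X, Tendsto (empiricalMeasure f x) atTop (𝓝 ν)) ↔
        (∃ ν : ProbabilityMeasure X, Tendsto (empiricalMeasure f y) atTop (𝓝 ν))) ∧
      (∀ νx νy : ProbabilityMeasure X,
        Tendsto (empiricalMeasure f x) atTop (𝓝 νx) →
        Tendsto (empiricalMeasure f y) atTop (𝓝 νy) → νx = νy) := by
  intro x hx y hy
  have hxy : Tendsto (fun n : ℕ => dist (f^[n] x) (f^[n] y)) atTop (𝓝 0) := by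
    refine squeeze_zero (fun n => dist_nonneg) (fun n => ?_) hdiam
    exact Metric.dist_le_diam_of_mem (Metric.isBounded_of_compactSpace)
      (Set.mem_image_of_mem _ hx) (Set.mem_image_of_mem _ hy)
  have hyx : Tendsto (fun n : ℕ => dist (f^[n] y) (f^[n] x)) atTop (𝓝 0) := by
    simpa [dist_comm] using hxy
  constructor
  · exact ⟨fun ⟨ν, hν⟩ => ⟨ν, key_transfer f hxy hν⟩,
      fun ⟨ν, hν⟩ => ⟨ν, key_transfer f hyx hν⟩⟩
  · intro νx νy hνx hνy
    exact tendsto_nhds_unique (key_transfer f hxy hνx) hνy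
end
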